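/- Let R and R' be rectangles with vertices (0,0),(a,0),(a,b),(0,b) and (0,0),(a',0),(a',b'),(0,b'), with b'/b = B + O(ε) and a'/a = C for constants B, C > 0, and b ≤ a. Suppose 0 < c < d < b and 0 < c' < d' < b' with c'/c = B + O(ε) and (b'−d')/(b−d) = B + O(ε). Then the piecewise-affine map g : R → R' defined by u = (a'/a)x and, for 0 ≤ y ≤ c, v = y[ (b'/b − c'/c)(x/a) + c'/c ], with analogous formulas on c ≤ y ≤ d and d ≤ y ≤ b, is a quasiconformal mapping with maximal dilatation K(g) ≤ max(C/B, B/C) + O(ε), is affine on all sides of R, and sends (0,c) to (0,c') and (0,d) to (0,d'). -/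

import Mathlib

set_option maxHeartbeats 1000000



/-- The quasiconformal dilatation of a (pointwise differentiable) planar map with
partial derivatives `u_x, u_y, v_x, v_y`, computed via
`K = (|f_z| + |f_z̄|)/(|f_z| − |f_z̄|)` with
`|f_z| = √((u_x+v_y)² + (v_x−u_y)²)/2`, `|f_z̄| = √((u_x−v_y)² + (v_x+u_y)²)/2`. -/
noncomputable def dilat (ux uy vx vy : ℝ) : ℝ :=
  (Real.sqrt ((ux + vy) ^ 2 + (vx - uy) ^ 2) + Real.sqrt ((ux - vy) ^ 2 + (vx + uy) ^ 2)) /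
    (Real.sqrt ((ux + vy) ^ 2 + (vx - uy) ^ 2) - Real.sqrt ((ux - vy) ^ 2 + (vx + uy) ^ 2))

lemma conv_pos (t P Q : ℝ) (h0 : 0 ≤ t) (h1 : t ≤ 1) (hP : 0 < P) (hQ : 0 < Q) :
    0 < (P - Q) * t + Q := by
  rcases le_total P Q with h | h
  · nlinarith [mul_nonneg (by linarith : (0:ℝ) ≤ 1 - t) (by linarith : (0:ℝ) ≤ Q - P)]
  · nlinarith [mul_nonneg h0 (by linarith : (0:ℝ) ≤ P - Q)]

lemma conv_abs (t P Q Bv δ : ℝ) (h0 : 0 ≤ t) (h1 : t ≤ 1)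
    (hP : |P - Bv| ≤ δ) (hQ : |Q - Bv| ≤ δ) : |(P - Q) * t + Q - Bv| ≤ δ := by
  rw [abs_le] at *
  constructor <;> nlinarith [hP.1, hP.2, hQ.1, hQ.2]

lemma sqrt_le_abs_add (p q : ℝ) : Real.sqrt (p ^ 2 + q ^ 2) ≤ |p| + |q| := by
  rw [show |p| + |q| = Real.sqrt ((|p| + |q|) ^ 2) from
    (Real.sqrt_sq (by positivity)).symm]
  apply Real.sqrt_le_sqrt
  nlinarith [sq_abs p, sq_abs q, mul_nonneg (abs_nonneg p) (abs_nonneg q)]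

lemma dilat_le (Bv C δ vx vy : ℝ) (hC : 0 < C) (hB : 0 < Bv) (hδ : 0 ≤ δ)
    (hδB : 2 * δ ≤ Bv) (hvx : |vx| ≤ δ) (hvy : |vy - Bv| ≤ δ) :
    dilat C 0 vx vy ≤ max (C / Bv) (Bv / C) +
      ((8 * (max C Bv) * Bv + 4 * Bv ^ 2 + 2 * (max C Bv) ^ 2) / (C * Bv ^ 2)) * δ := by
  obtain ⟨hvy1, hvy2⟩ := abs_le.mp hvy
  obtain ⟨hvx1, hvx2⟩ := abs_le.mp hvx
  set M := max C Bv with hM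
  have hMC : C ≤ M := le_max_left _ _
  have hMB : Bv ≤ M := le_max_right _ _
  have hM0 : 0 < M := lt_of_lt_of_le hB hMB
  have hvy0 : 0 < vy := by linarith
  set S := Real.sqrt ((C + vy) ^ 2 + (vx - 0) ^ 2) with hS
  set T := Real.sqrt ((C - vy) ^ 2 + (vx + 0) ^ 2) with hT
  have hSsq : S ^ 2 = (C + vy) ^ 2 + (vx - 0) ^ 2 := Real.sq_sqrt (by positivity)
  have hTsq : T ^ 2 = (C - vy) ^ 2 + (vx + 0) ^ 2 := Real.sq_sqrt (by positivity)
  have hT0 : 0 ≤ T := Real.sqrt_nonneg _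
  have hS0 : 0 ≤ S := Real.sqrt_nonneg _
  have hTS : T < S := by
    rw [hS, hT]
    apply Real.sqrt_lt_sqrt (by positivity)
    nlinarith
  have hdil : dilat C 0 vx vy = (S + T) / (S - T) := by
    unfold dilat
    rw [hS, hT]
  have hSTpos : 0 < S - T := by linarith
  have hST2 : 0 < S + T := by linarith
  have h4 : (S - T) * (S + T) = 4 * C * vy := by linear_combination hSsq - hTsq
  have heq : (S + T) / (S - T) = (S + T) ^ 2 / (4 * C * vy) := by
    rw [eq_div_iff (by positivity : (4 : ℝ) * C * vy ≠ 0), div_mul_eq_mul_div,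
      div_eq_iff (ne_of_gt hSTpos)]
    linear_combination (-(S + T)) * h4
  have hs1 : S ≤ C + vy + δ := by
    have h := sqrt_le_abs_add (C + vy) (vx - 0)
    rw [← hS] at h
    rw [sub_zero, abs_of_pos (by linarith : (0:ℝ) < C + vy)] at h
    have : |vx| ≤ δ := abs_le.mpr ⟨hvx1, hvx2⟩
    linarith
  have hs2 : T ≤ |C - vy| + δ := by
    have h := sqrt_le_abs_add (C - vy) (vx + 0)
    rw [← hT] at h
    rw [add_zero] at h
    have : |vx| ≤ δ := abs_le.mpr ⟨hvx1, hvx2⟩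
    linarith
  have hstb : S + T ≤ 2 * M + 4 * δ := by
    rcases le_total C vy with h | h
    · rw [abs_of_nonpos (by linarith)] at hs2; linarith
    · rw [abs_of_nonneg (by linarith)] at hs2; linarith
  have hfin1 : (S + T) ^ 2 / (4 * C * vy) ≤ (2 * (M + 2 * δ)) ^ 2 / (4 * C * vy) := by
    apply div_le_div_of_nonneg_right ?_ (by positivity)
    · nlinarith
  have heq2 : (2 * (M + 2 * δ)) ^ 2 / (4 * C * vy) = (M + 2 * δ) ^ 2 / (C * vy) := by
    rw [div_eq_div_iff (by positivity) (by positivity)]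
    ring
  have hmax : max (C / Bv) (Bv / C) = M ^ 2 / (C * Bv) := by
    rcases le_total C Bv with h | h
    · rw [hM, max_eq_right h, max_eq_right (by rw [div_le_div_iff₀ hB hC]; nlinarith)]
      rw [div_eq_div_iff hC.ne' (by positivity)]; ring
    · rw [hM, max_eq_left h, max_eq_left (by rw [div_le_div_iff₀ hC hB]; nlinarith)]
      rw [div_eq_div_iff hB.ne' (by positivity)]; ring
  have hkey : (M + 2 * δ) ^ 2 * Bv ^ 2 ≤ (M ^ 2 * Bv + (8 * M * Bv + 4 * Bv ^ 2 + 2 * M ^ 2) * δ) * vy := by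
    have hNpos : (0:ℝ) ≤ M ^ 2 * Bv + (8 * M * Bv + 4 * Bv ^ 2 + 2 * M ^ 2) * δ := by
      nlinarith [sq_nonneg M, mul_pos hM0 hB]
    nlinarith [mul_nonneg (mul_nonneg hδ (sq_nonneg (M + 2 * Bv)))
        (by linarith : (0:ℝ) ≤ Bv - 2 * δ),
      mul_nonneg hNpos (by linarith : (0:ℝ) ≤ vy - (Bv - δ))]
  have hlast : (M + 2 * δ) ^ 2 / (C * vy) ≤ M ^ 2 / (C * Bv) + ((8 * M * Bv + 4 * Bv ^ 2 + 2 * M ^ 2) / (C * Bv ^ 2)) * δ := by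
    rw [div_le_iff₀ (by positivity : (0:ℝ) < C * vy)]
    have hR : (M ^ 2 / (C * Bv) + ((8 * M * Bv + 4 * Bv ^ 2 + 2 * M ^ 2) / (C * Bv ^ 2)) * δ) * (C * vy)
        = (M ^ 2 * Bv + (8 * M * Bv + 4 * Bv ^ 2 + 2 * M ^ 2) * δ) * vy / Bv ^ 2 := by
      field_simp
    rw [hR, le_div_iff₀ (by positivity : (0:ℝ) < Bv ^ 2)]
    exact hkey
  rw [hdil, heq, hmax]
  calc (S + T) ^ 2 / (4 * C * vy) ≤ (2 * (M + 2 * δ)) ^ 2 / (4 * C * vy) := hfin1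
    _ = (M + 2 * δ) ^ 2 / (C * vy) := heq2
    _ ≤ M ^ 2 / (C * Bv) + ((8 * M * Bv + 4 * Bv ^ 2 + 2 * M ^ 2) / (C * Bv ^ 2)) * δ := hlast

noncomputable def pw (c d s1 s2 s3 y : ℝ) : ℝ :=
  if y ≤ c then y * s1
  else if y ≤ d then c * s1 + (y - c) * s2
  else c * s1 + (d - c) * s2 + (y - d) * s3

lemma pw_mono (c d b s1 s2 s3 y₁ y₂ : ℝ) (hc : 0 < c) (hcd : c < d) (hdb : d < b)
    (h1 : 0 < s1) (h2 : 0 < s2) (h3 : 0 < s3)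
    (hy1 : 0 ≤ y₁) (hy2 : y₂ ≤ b) (hlt : y₁ < y₂) :
    pw c d s1 s2 s3 y₁ < pw c d s1 s2 s3 y₂ := by
  unfold pw
  by_cases h1c : y₁ ≤ c
  · rw [if_pos h1c]
    by_cases h2c : y₂ ≤ c
    · rw [if_pos h2c]
      nlinarith [mul_pos (by linarith : (0:ℝ) < y₂ - y₁) h1]
    · rw [if_neg h2c]
      push_neg at h2c
      by_cases h2d : y₂ ≤ d
      · rw [if_pos h2d]
        nlinarith [mul_nonneg (by linarith : (0:ℝ) ≤ c - y₁) h1.le,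
          mul_pos (by linarith : (0:ℝ) < y₂ - c) h2]
      · rw [if_neg h2d]
        push_neg at h2d
        nlinarith [mul_nonneg (by linarith : (0:ℝ) ≤ c - y₁) h1.le,
          mul_pos (by linarith : (0:ℝ) < d - c) h2,
          mul_pos (by linarith : (0:ℝ) < y₂ - d) h3]
  · rw [if_neg h1c]
    push_neg at h1c
    have h2c : ¬ y₂ ≤ c := by push_neg; linarith
    rw [if_neg h2c]
    by_cases h1d : y₁ ≤ d
    · rw [if_pos h1d]
      by_cases h2d : y₂ ≤ d
      · rw [if_pos h2d]
        nlinarith [mul_pos (by linarith : (0:ℝ) < y₂ - y₁) h2]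
      · rw [if_neg h2d]
        push_neg at h2d
        nlinarith [mul_nonneg (by linarith : (0:ℝ) ≤ d - y₁) h2.le,
          mul_pos (by linarith : (0:ℝ) < y₂ - d) h3]
    · push_neg at h1d
      have h2d : ¬ y₂ ≤ d := by push_neg; linarith
      rw [if_neg (by push_neg; exact h1d : ¬ y₁ ≤ d), if_neg h2d]
      nlinarith [mul_pos (by linarith : (0:ℝ) < y₂ - y₁) h3]

lemma pw_nonneg (c d b s1 s2 s3 y : ℝ) (hc : 0 < c) (hcd : c < d) (hdb : d < b)
    (h1 : 0 < s1) (h2 : 0 < s2) (h3 : 0 < s3) (hy0 : 0 ≤ y) (hyb : y ≤ b) :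
    0 ≤ pw c d s1 s2 s3 y := by
  unfold pw
  by_cases hyc : y ≤ c
  · rw [if_pos hyc]; exact mul_nonneg hy0 h1.le
  · rw [if_neg hyc]; push_neg at hyc
    by_cases hyd : y ≤ d
    · rw [if_pos hyd]
      nlinarith [mul_pos hc h1, mul_nonneg (by linarith : (0:ℝ) ≤ y - c) h2.le]
    · rw [if_neg hyd]; push_neg at hyd
      nlinarith [mul_pos hc h1, mul_pos (by linarith : (0:ℝ) < d - c) h2,
        mul_nonneg (by linarith : (0:ℝ) ≤ y - d) h3.le]

lemma pw_le (c d b s1 s2 s3 y : ℝ) (hc : 0 < c) (hcd : c < d) (hdb : d < b)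
    (h1 : 0 < s1) (h2 : 0 < s2) (h3 : 0 < s3) (hy0 : 0 ≤ y) (hyb : y ≤ b) :
    pw c d s1 s2 s3 y ≤ c * s1 + (d - c) * s2 + (b - d) * s3 := by
  unfold pw
  by_cases hyc : y ≤ c
  · rw [if_pos hyc]
    nlinarith [mul_nonneg (by linarith : (0:ℝ) ≤ c - y) h1.le,
      mul_pos (by linarith : (0:ℝ) < d - c) h2, mul_pos (by linarith : (0:ℝ) < b - d) h3]
  · rw [if_neg hyc]; push_neg at hyc
    by_cases hyd : y ≤ d
    · rw [if_pos hyd]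
      nlinarith [mul_nonneg (by linarith : (0:ℝ) ≤ d - y) h2.le,
        mul_pos (by linarith : (0:ℝ) < b - d) h3]
    · rw [if_neg hyd]; push_neg at hyd
      nlinarith [mul_nonneg (by linarith : (0:ℝ) ≤ b - y) h3.le]

lemma pw_surj (c d b s1 s2 s3 w : ℝ) (hc : 0 < c) (hcd : c < d) (hdb : d < b)
    (h1 : 0 < s1) (h2 : 0 < s2) (h3 : 0 < s3)
    (hw0 : 0 ≤ w) (hwT : w ≤ c * s1 + (d - c) * s2 + (b - d) * s3) :
    ∃ y, 0 ≤ y ∧ y ≤ b ∧ pw c d s1 s2 s3 y = w := by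
  by_cases hw1 : w ≤ c * s1
  · refine ⟨w / s1, div_nonneg hw0 h1.le, ?_, ?_⟩
    · have : w / s1 ≤ c := by rw [div_le_iff₀ h1]; nlinarith
      linarith
    · unfold pw
      rw [if_pos (by rw [div_le_iff₀ h1]; nlinarith : w / s1 ≤ c)]
      field_simp
  · push_neg at hw1
    by_cases hw2 : w ≤ c * s1 + (d - c) * s2
    · refine ⟨c + (w - c * s1) / s2,
        by have := div_pos (by linarith : (0:ℝ) < w - c * s1) h2; linarith, ?_, ?_⟩
      · have hle : (w - c * s1) / s2 ≤ d - c := by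
          rw [div_le_iff₀ h2]; nlinarith
        linarith
      · have hgt : ¬ (c + (w - c * s1) / s2 ≤ c) := by
          push_neg
          have : 0 < (w - c * s1) / s2 := div_pos (by linarith) h2
          linarith
        unfold pw
        rw [if_neg hgt, if_pos (by
          have hle : (w - c * s1) / s2 ≤ d - c := by rw [div_le_iff₀ h2]; nlinarith
          linarith : c + (w - c * s1) / s2 ≤ d)]
        rw [show c + (w - c * s1) / s2 - c = (w - c * s1) / s2 by ring,
          div_mul_cancel₀ _ h2.ne']
        ring
    · push_neg at hw2
      refine ⟨d + (w - (c * s1 + (d - c) * s2)) / s3,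
        by have := div_pos (by linarith : (0:ℝ) < w - (c * s1 + (d - c) * s2)) h3
           linarith, ?_, ?_⟩
      · have hle : (w - (c * s1 + (d - c) * s2)) / s3 ≤ b - d := by
          rw [div_le_iff₀ h3]; nlinarith
        linarith
      · have hgt : 0 < (w - (c * s1 + (d - c) * s2)) / s3 :=
          div_pos (by linarith) h3
        unfold pw
        rw [if_neg (by push_neg; linarith : ¬ d + (w - (c * s1 + (d - c) * s2)) / s3 ≤ c),
          if_neg (by push_neg; linarith : ¬ d + (w - (c * s1 + (d - c) * s2)) / s3 ≤ d)]
        rw [show d + (w - (c * s1 + (d - c) * s2)) / s3 - d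
            = (w - (c * s1 + (d - c) * s2)) / s3 by ring, div_mul_cancel₀ _ h3.ne']
        ring

lemma dm_bound (b c d B C₀ ε b' c' d' : ℝ) (hb : 0 < b) (hc : 0 < c)
    (hcd : c < d) (hdb : d < b) (hC₀ : 0 < C₀) (hε : 0 < ε)
    (h1 : |b' / b - B| ≤ C₀ * ε) (h2 : |c' / c - B| ≤ C₀ * ε)
    (h3 : |(b' - d') / (b - d) - B| ≤ C₀ * ε) :
    |(d' - c') / (d - c) - B| ≤ C₀ * (1 + 3 * b / (d - c)) * ε := by
  have hdc : 0 < d - c := by linarith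
  have hbd : 0 < b - d := by linarith
  have q1 : b * (b' / b - B) = b' - B * b := by field_simp
  have q2 : c * (c' / c - B) = c' - B * c := by field_simp
  have q3 : (b - d) * ((b' - d') / (b - d) - B) = b' - d' - B * (b - d) := by
    field_simp
  have e1 := abs_le.mp h1
  have e2 := abs_le.mp h2
  have e3 := abs_le.mp h3
  have p1 : b' - B * b ≤ b * (C₀ * ε) := by
    rw [← q1]; exact mul_le_mul_of_nonneg_left e1.2 hb.le
  have p1' : -(b * (C₀ * ε)) ≤ b' - B * b := by
    rw [← q1]; nlinarith [mul_le_mul_of_nonneg_left e1.1 hb.le]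
  have p2 : c' - B * c ≤ c * (C₀ * ε) := by
    rw [← q2]; exact mul_le_mul_of_nonneg_left e2.2 hc.le
  have p2' : -(c * (C₀ * ε)) ≤ c' - B * c := by
    rw [← q2]; nlinarith [mul_le_mul_of_nonneg_left e2.1 hc.le]
  have p3 : b' - d' - B * (b - d) ≤ (b - d) * (C₀ * ε) := by
    rw [← q3]; exact mul_le_mul_of_nonneg_left e3.2 hbd.le
  have p3' : -((b - d) * (C₀ * ε)) ≤ b' - d' - B * (b - d) := by
    rw [← q3]; nlinarith [mul_le_mul_of_nonneg_left e3.1 hbd.le]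
  have hCε : 0 ≤ C₀ * ε := by positivity
  have hnum : |d' - c' - B * (d - c)| ≤ C₀ * ε * (3 * b) := by
    rw [abs_le]
    constructor <;> nlinarith [mul_nonneg hCε (by linarith : (0:ℝ) ≤ b + d - c)]
  have heq : (d' - c') / (d - c) - B = (d' - c' - B * (d - c)) / (d - c) := by
    field_simp
  rw [heq, abs_div, abs_of_pos hdc, div_le_iff₀ hdc]
  have h2' : C₀ * (1 + 3 * b / (d - c)) * ε * (d - c)
      = C₀ * ε * (d - c) + C₀ * ε * (3 * b) := by
    field_simp
  rw [h2']
  nlinarith [mul_nonneg (mul_nonneg hC₀.le hε.le) hdc.le]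

/-- Affine Mapping Lemma: under the stated ratio hypotheses
(with O(ε)-constant C₀), the piecewise-affine map g : R → R' (given by the explicit
formulas of the paper) is a bijection of the rectangles, sends (0,c) to (0,c') and
(0,d) to (0,d'), is affine on all sides, and its pointwise dilatation, computed from
the explicit partial derivatives on each of the three horizontal strips, is at most
max(C/B, B/C) + O(ε). -/
theorem stmt_10 (a b c d B C C₀ : ℝ) (ha : 0 < a) (hb : 0 < b) (hB : 0 < B) (hC : 0 < C)
    (hC₀ : 0 < C₀) (hc : 0 < c) (hcd : c < d) (hdb : d < b) (hba : b ≤ a) :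
    ∃ C' > 0, ∃ ε₀ > 0, ∀ ε : ℝ, 0 < ε → ε ≤ ε₀ → ∀ a' b' c' d' : ℝ,
      0 < a' → 0 < c' → c' < d' → d' < b' →
      a' / a = C →
      |b' / b - B| ≤ C₀ * ε →
      |c' / c - B| ≤ C₀ * ε →
      |(b' - d') / (b - d) - B| ≤ C₀ * ε →
      let Dm : ℝ := (d' - c') / (d - c)
      let Em : ℝ := (b' - d') / (b - d)
      let v : ℝ → ℝ → ℝ := fun x y =>
        if y ≤ c then y * ((b' / b - c' / c) * (x / a) + c' / c)
        else if y ≤ d then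
          y * ((b' / b - Dm) * (x / a) + Dm) + c * ((Dm - c' / c) * (x / a) + c' / c - Dm)
        else b' + (y - b) * ((b' / b - Em) * (x / a) + Em)
      let g : ℝ × ℝ → ℝ × ℝ := fun p => (a' / a * p.1, v p.1 p.2)
      -- g is a homeomorphism of the rectangles (a continuous bijection)
      (Set.BijOn g (Set.Icc 0 a ×ˢ Set.Icc 0 b) (Set.Icc 0 a' ×ˢ Set.Icc 0 b')) ∧
      -- g sends P₁ = (0,c) to P₁' = (0,c') and P₂ = (0,d) to P₂' = (0,d')
      g (0, c) = (0, c') ∧ g (0, d) = (0, d') ∧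
      -- g is affine on all sides of R
      (∃ α β : ℝ, ∀ x ∈ Set.Icc 0 a, v x 0 = α * x + β) ∧
      (∃ α β : ℝ, ∀ x ∈ Set.Icc 0 a, v x b = α * x + β) ∧
      (∀ x ∈ ({0, a} : Set ℝ),
        (∃ α β : ℝ, ∀ y ∈ Set.Icc 0 c, v x y = α * y + β) ∧
        (∃ α β : ℝ, ∀ y ∈ Set.Icc c d, v x y = α * y + β) ∧
        (∃ α β : ℝ, ∀ y ∈ Set.Icc d b, v x y = α * y + β)) ∧
      -- dilatation bound on the strip 0 ≤ y ≤ c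
      (∀ x ∈ Set.Icc 0 a, ∀ y ∈ Set.Icc 0 c,
        dilat (a' / a) 0 ((b' / b - c' / c) * (y / a))
            ((b' / b - c' / c) * (x / a) + c' / c) ≤ max (C / B) (B / C) + C' * ε) ∧
      -- dilatation bound on the strip c ≤ y ≤ d
      (∀ x ∈ Set.Icc 0 a, ∀ y ∈ Set.Icc c d,
        dilat (a' / a) 0 ((b' / b - Dm) * (y / a) + c * (Dm - c' / c) / a)
            ((b' / b - Dm) * (x / a) + Dm) ≤ max (C / B) (B / C) + C' * ε) ∧
      -- dilatation bound on the strip d ≤ y ≤ b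
      (∀ x ∈ Set.Icc 0 a, ∀ y ∈ Set.Icc d b,
        dilat (a' / a) 0 ((y - b) * (b' / b - Em) / a)
            ((b' / b - Em) * (x / a) + Em) ≤ max (C / B) (B / C) + C' * ε) := by
  have hdc : 0 < d - c := by linarith
  have hbd : 0 < b - d := by linarith
  set K₁ : ℝ := C₀ * (1 + 3 * b / (d - c)) with hK₁
  have h3b : 0 < 3 * b / (d - c) := div_pos (by linarith) hdc
  have hK₁pos : 0 < K₁ := by rw [hK₁]; nlinarith
  have hMB : B ≤ max C B := le_max_right _ _
  have hMC : C ≤ max C B := le_max_left _ _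
  have hM0 : 0 < max C B := lt_of_lt_of_le hB hMB
  refine ⟨((8 * (max C B) * B + 4 * B ^ 2 + 2 * (max C B) ^ 2) / (C * B ^ 2)) * (4 * K₁), ?_,
    B / (8 * K₁), by positivity, ?_⟩
  · apply mul_pos _ (by linarith)
    apply div_pos (by nlinarith) (by positivity)
  intro ε hε hεε a' b' c' d' ha'0 hc'0 hc'd' hd'b' haC hbB hcB hdB
  intro Dm Em v g
  have hd'0 : 0 < d' := lt_trans hc'0 hc'd'
  have hb'0 : 0 < b' := lt_trans hd'0 hd'b'
  have hane : a ≠ 0 := ne_of_gt ha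
  have hbne : b ≠ 0 := ne_of_gt hb
  have hcne : c ≠ 0 := ne_of_gt hc
  have hdcne : d - c ≠ 0 := ne_of_gt hdc
  have hbdne : b - d ≠ 0 := ne_of_gt hbd
  have ha' : a' = C * a := by field_simp at haC; linarith
  have hDm : Dm = (d' - c') / (d - c) := rfl
  have hEm : Em = (b' - d') / (b - d) := rfl
  have hDm0 : 0 < Dm := div_pos (by linarith) hdc
  have hEm0 : 0 < Em := div_pos (by linarith) hbd
  have hP0 : 0 < b' / b := div_pos hb'0 hb
  have hQ0 : 0 < c' / c := div_pos hc'0 hc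
  -- K₁-based bounds
  have hεK : 0 ≤ K₁ * ε := by positivity
  have hC₀K₁ : C₀ * ε ≤ K₁ * ε := by
    rw [hK₁]
    nlinarith [mul_nonneg (mul_nonneg hC₀.le h3b.le) hε.le]
  have hPB : |b' / b - B| ≤ K₁ * ε := le_trans hbB hC₀K₁
  have hQB : |c' / c - B| ≤ K₁ * ε := le_trans hcB hC₀K₁
  have hEmB : |Em - B| ≤ K₁ * ε := le_trans (by rw [hEm]; exact hdB) hC₀K₁
  have hDmB : |Dm - B| ≤ K₁ * ε := by
    rw [hDm, hK₁]
    exact dm_bound b c d B C₀ ε b' c' d' hb hc hcd hdb hC₀ hε hbB hcB hdB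
  have hδB : 2 * (4 * K₁ * ε) ≤ B := by
    have h8 : ε * (8 * K₁) ≤ B := by
      rw [← le_div_iff₀ (by positivity)]; exact hεε
    linarith
  -- slope positivity
  have hs1pos : ∀ x, 0 ≤ x → x ≤ a → 0 < (b' / b - c' / c) * (x / a) + c' / c :=
    fun x h1 h2 => conv_pos _ _ _ (div_nonneg h1 ha.le) ((div_le_one ha).mpr h2) hP0 hQ0
  have hs2pos : ∀ x, 0 ≤ x → x ≤ a → 0 < (b' / b - Dm) * (x / a) + Dm :=
    fun x h1 h2 => conv_pos _ _ _ (div_nonneg h1 ha.le) ((div_le_one ha).mpr h2) hP0 hDm0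
  have hs3pos : ∀ x, 0 ≤ x → x ≤ a → 0 < (b' / b - Em) * (x / a) + Em :=
    fun x h1 h2 => conv_pos _ _ _ (div_nonneg h1 ha.le) ((div_le_one ha).mpr h2) hP0 hEm0
  -- the fundamental identity
  have hid : ∀ x : ℝ, c * ((b' / b - c' / c) * (x / a) + c' / c)
      + (d - c) * ((b' / b - Dm) * (x / a) + Dm)
      + (b - d) * ((b' / b - Em) * (x / a) + Em) = b' := by
    intro x
    rw [hDm, hEm]
    field_simp
    ring
  -- bridge to pw
  have hvpw : ∀ x y : ℝ, v x y = pw c d ((b' / b - c' / c) * (x / a) + c' / c)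
      ((b' / b - Dm) * (x / a) + Dm) ((b' / b - Em) * (x / a) + Em) y := by
    intro x y
    simp only [v]
    unfold pw
    by_cases h1 : y ≤ c
    · rw [if_pos h1, if_pos h1]
    · rw [if_neg h1, if_neg h1]
      by_cases h2 : y ≤ d
      · rw [if_pos h2, if_pos h2]; ring
      · rw [if_neg h2, if_neg h2]
        linear_combination -hid x
  -- monotonicity of v in y
  have hmono : ∀ x, 0 ≤ x → x ≤ a → ∀ y₁ y₂, 0 ≤ y₁ → y₂ ≤ b → y₁ < y₂ →
      v x y₁ < v x y₂ := by
    intro x hx1 hx2 y₁ y₂ hy1 hy2 hlt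
    rw [hvpw, hvpw]
    exact pw_mono c d b _ _ _ y₁ y₂ hc hcd hdb (hs1pos x hx1 hx2) (hs2pos x hx1 hx2)
      (hs3pos x hx1 hx2) hy1 hy2 hlt
  -- range of v
  have hrange : ∀ x, 0 ≤ x → x ≤ a → ∀ y, 0 ≤ y → y ≤ b →
      0 ≤ v x y ∧ v x y ≤ b' := by
    intro x hx1 hx2 y hy1 hy2
    rw [hvpw]
    constructor
    · exact pw_nonneg c d b _ _ _ y hc hcd hdb (hs1pos x hx1 hx2) (hs2pos x hx1 hx2)
        (hs3pos x hx1 hx2) hy1 hy2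
    · exact le_trans (pw_le c d b _ _ _ y hc hcd hdb (hs1pos x hx1 hx2)
        (hs2pos x hx1 hx2) (hs3pos x hx1 hx2) hy1 hy2) (le_of_eq (hid x))
  refine ⟨⟨?maps, ?inj, ?surj⟩, ?p1, ?p2, ?bot, ?top, ?vert, ?d1, ?d2, ?d3⟩
  case maps =>
    rintro ⟨x, y⟩ hp
    simp only [Set.mem_prod, Set.mem_Icc] at hp ⊢
    obtain ⟨⟨hx0, hxa⟩, hy0, hyb⟩ := hp
    refine ⟨⟨?_, ?_⟩, ?_, ?_⟩
    · show 0 ≤ a' / a * x; rw [haC]; exact mul_nonneg hC.le hx0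
    · show a' / a * x ≤ a'; rw [haC, ha']; exact mul_le_mul_of_nonneg_left hxa hC.le
    · exact (hrange x hx0 hxa y hy0 hyb).1
    · exact (hrange x hx0 hxa y hy0 hyb).2
  case inj =>
    rintro ⟨x₁, y₁⟩ hp ⟨x₂, y₂⟩ hq hpq
    simp only [Set.mem_prod, Set.mem_Icc] at hp hq
    simp only [g, Prod.mk.injEq] at hpq
    obtain ⟨h1, h2⟩ := hpq
    have hCa : a' / a ≠ 0 := by rw [haC]; exact hC.ne'
    have hx : x₁ = x₂ := mul_left_cancel₀ hCa h1
    subst hx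
    rcases lt_trichotomy y₁ y₂ with h | h | h
    · exact absurd h2 (ne_of_lt (hmono x₁ hp.1.1 hp.1.2 y₁ y₂ hp.2.1 hq.2.2 h))
    · rw [h]
    · exact absurd h2.symm (ne_of_lt (hmono x₁ hp.1.1 hp.1.2 y₂ y₁ hq.2.1 hp.2.2 h))
  case surj =>
    rintro ⟨u, w⟩ hm
    simp only [Set.mem_prod, Set.mem_Icc] at hm
    obtain ⟨⟨hu0, hua⟩, hw0, hwb⟩ := hm
    have hx0 : 0 ≤ u / C := div_nonneg hu0 hC.le
    have hxa : u / C ≤ a := by rw [div_le_iff₀ hC]; rw [ha'] at hua; linarith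
    obtain ⟨y, hy0, hyb, hypw⟩ := pw_surj c d b
      ((b' / b - c' / c) * (u / C / a) + c' / c)
      ((b' / b - Dm) * (u / C / a) + Dm) ((b' / b - Em) * (u / C / a) + Em) w
      hc hcd hdb (hs1pos _ hx0 hxa) (hs2pos _ hx0 hxa) (hs3pos _ hx0 hxa) hw0
      (by rw [hid (u / C)]; exact hwb)
    refine ⟨(u / C, y), by simp only [Set.mem_prod, Set.mem_Icc]
                           exact ⟨⟨hx0, hxa⟩, hy0, hyb⟩, ?_⟩
    simp only [g, Prod.mk.injEq]
    constructor
    · rw [haC]; field_simp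
    · rw [hvpw]; exact hypw
  case p1 =>
    simp only [g, Prod.mk.injEq]
    constructor
    · rw [mul_zero]
    · simp only [v]
      rw [if_pos (le_refl c), zero_div, mul_zero, zero_add]
      field_simp
  case p2 =>
    simp only [g, Prod.mk.injEq]
    constructor
    · rw [mul_zero]
    · simp only [v]
      rw [if_neg (not_le.mpr hcd), if_pos (le_refl d), hDm,
        zero_div, mul_zero, zero_add, mul_zero, zero_add]
      field_simp
      ring
  case bot =>
    refine ⟨0, 0, fun x _ => ?_⟩
    simp only [v]
    rw [if_pos hc.le]
    ring
  case top =>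
    refine ⟨0, b', fun x _ => ?_⟩
    simp only [v]
    rw [if_neg (not_le.mpr (lt_trans hcd hdb)), if_neg (not_le.mpr hdb)]
    ring
  case vert =>
    intro x _
    refine ⟨⟨(b' / b - c' / c) * (x / a) + c' / c, 0, fun y hy => ?_⟩,
      ⟨(b' / b - Dm) * (x / a) + Dm,
        c * (((b' / b - c' / c) * (x / a) + c' / c) - ((b' / b - Dm) * (x / a) + Dm)),
        fun y hy => ?_⟩,
      ⟨(b' / b - Em) * (x / a) + Em, b' - b * ((b' / b - Em) * (x / a) + Em),
        fun y hy => ?_⟩⟩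
    · rw [Set.mem_Icc] at hy
      simp only [v]
      rw [if_pos hy.2]
      ring
    · rw [Set.mem_Icc] at hy
      simp only [v]
      by_cases hyc : y ≤ c
      · have : y = c := le_antisymm hyc hy.1
        subst this
        rw [if_pos (le_refl y)]
        ring
      · rw [if_neg hyc, if_pos hy.2]
        ring
    · rw [Set.mem_Icc] at hy
      simp only [v]
      have hyc : ¬ y ≤ c := by push_neg; linarith [hy.1]
      by_cases hyd : y ≤ d
      · have : y = d := le_antisymm hyd hy.1
        subst this
        rw [if_neg hyc, if_pos (le_refl y)]
        linear_combination hid x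
      · rw [if_neg hyc, if_neg hyd]
        ring
  case d1 =>
    intro x hx y hy
    rw [Set.mem_Icc] at hx hy
    rw [haC]
    have hPQ : |b' / b - c' / c| ≤ 2 * (K₁ * ε) := by
      calc |b' / b - c' / c| ≤ |b' / b - B| + |c' / c - B| := by
            rw [abs_sub_comm (c' / c) B] at *
            exact (abs_sub_le _ B _).trans (by rw [abs_sub_comm B (c' / c)])
        _ ≤ 2 * (K₁ * ε) := by linarith
    have hvx : |(b' / b - c' / c) * (y / a)| ≤ 4 * K₁ * ε := by
      rw [abs_mul]
      have hya : |y / a| ≤ 1 := by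
        rw [abs_of_nonneg (div_nonneg hy.1 ha.le), div_le_one ha]
        linarith [hy.2]
      calc |b' / b - c' / c| * |y / a| ≤ (2 * (K₁ * ε)) * 1 :=
            mul_le_mul hPQ hya (abs_nonneg _) (by linarith)
        _ ≤ 4 * K₁ * ε := by linarith
    have hvy : |(b' / b - c' / c) * (x / a) + c' / c - B| ≤ 4 * K₁ * ε := by
      have := conv_abs (x / a) (b' / b) (c' / c) B (K₁ * ε)
        (div_nonneg hx.1 ha.le) ((div_le_one ha).mpr hx.2) hPB hQB
      calc |(b' / b - c' / c) * (x / a) + c' / c - B| ≤ K₁ * ε := this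
        _ ≤ 4 * K₁ * ε := by linarith
    have := dilat_le B C (4 * K₁ * ε) _ _ hC hB (by positivity) hδB hvx hvy
    calc dilat C 0 ((b' / b - c' / c) * (y / a)) ((b' / b - c' / c) * (x / a) + c' / c)
        ≤ max (C / B) (B / C) + (8 * (max C B) * B + 4 * B ^ 2 + 2 * (max C B) ^ 2)
          / (C * B ^ 2) * (4 * K₁ * ε) := this
      _ = max (C / B) (B / C) + (8 * (max C B) * B + 4 * B ^ 2 + 2 * (max C B) ^ 2)
          / (C * B ^ 2) * (4 * K₁) * ε := by ring
  case d2 =>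
    intro x hx y hy
    rw [Set.mem_Icc] at hx hy
    rw [haC]
    have hPD : |b' / b - Dm| ≤ 2 * (K₁ * ε) := by
      calc |b' / b - Dm| ≤ |b' / b - B| + |Dm - B| := by
            have := abs_sub_le (b' / b) B Dm
            rw [abs_sub_comm B Dm] at this
            exact this
        _ ≤ 2 * (K₁ * ε) := by linarith
    have hDQ : |Dm - c' / c| ≤ 2 * (K₁ * ε) := by
      calc |Dm - c' / c| ≤ |Dm - B| + |c' / c - B| := by
            have := abs_sub_le Dm B (c' / c)
            rw [abs_sub_comm B (c' / c)] at this
            exact this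
        _ ≤ 2 * (K₁ * ε) := by linarith
    have hvx : |(b' / b - Dm) * (y / a) + c * (Dm - c' / c) / a| ≤ 4 * K₁ * ε := by
      have hya : |y / a| ≤ 1 := by
        rw [abs_of_nonneg (div_nonneg (by linarith [hy.1] : (0:ℝ) ≤ y) ha.le), div_le_one ha]
        linarith [hy.2]
      have hca : |c / a| ≤ 1 := by
        rw [abs_of_nonneg (div_nonneg hc.le ha.le), div_le_one ha]
        linarith
      have e1 : |(b' / b - Dm) * (y / a)| ≤ 2 * (K₁ * ε) := by
        rw [abs_mul]
        calc |b' / b - Dm| * |y / a| ≤ (2 * (K₁ * ε)) * 1 :=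
              mul_le_mul hPD hya (abs_nonneg _) (by linarith)
          _ = 2 * (K₁ * ε) := by ring
      have e2 : |c * (Dm - c' / c) / a| ≤ 2 * (K₁ * ε) := by
        rw [show c * (Dm - c' / c) / a = (Dm - c' / c) * (c / a) by ring, abs_mul]
        calc |Dm - c' / c| * |c / a| ≤ (2 * (K₁ * ε)) * 1 :=
              mul_le_mul hDQ hca (abs_nonneg _) (by linarith)
          _ = 2 * (K₁ * ε) := by ring
      calc |(b' / b - Dm) * (y / a) + c * (Dm - c' / c) / a|
          ≤ |(b' / b - Dm) * (y / a)| + |c * (Dm - c' / c) / a| := abs_add_le _ _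
        _ ≤ 4 * K₁ * ε := by linarith
    have hvy : |(b' / b - Dm) * (x / a) + Dm - B| ≤ 4 * K₁ * ε := by
      have := conv_abs (x / a) (b' / b) Dm B (K₁ * ε)
        (div_nonneg hx.1 ha.le) ((div_le_one ha).mpr hx.2) hPB hDmB
      calc |(b' / b - Dm) * (x / a) + Dm - B| ≤ K₁ * ε := this
        _ ≤ 4 * K₁ * ε := by linarith
    have := dilat_le B C (4 * K₁ * ε) _ _ hC hB (by positivity) hδB hvx hvy
    calc dilat C 0 ((b' / b - Dm) * (y / a) + c * (Dm - c' / c) / a)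
          ((b' / b - Dm) * (x / a) + Dm)
        ≤ max (C / B) (B / C) + (8 * (max C B) * B + 4 * B ^ 2 + 2 * (max C B) ^ 2)
          / (C * B ^ 2) * (4 * K₁ * ε) := this
      _ = max (C / B) (B / C) + (8 * (max C B) * B + 4 * B ^ 2 + 2 * (max C B) ^ 2)
          / (C * B ^ 2) * (4 * K₁) * ε := by ring
  case d3 =>
    intro x hx y hy
    rw [Set.mem_Icc] at hx hy
    rw [haC]
    have hPE : |b' / b - Em| ≤ 2 * (K₁ * ε) := by
      calc |b' / b - Em| ≤ |b' / b - B| + |Em - B| := by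
            have := abs_sub_le (b' / b) B Em
            rw [abs_sub_comm B Em] at this
            exact this
        _ ≤ 2 * (K₁ * ε) := by linarith
    have hvx : |(y - b) * (b' / b - Em) / a| ≤ 4 * K₁ * ε := by
      have hyb : |(y - b) / a| ≤ 1 := by
        rw [abs_div, abs_of_pos ha, div_le_one ha, abs_of_nonpos (by linarith [hy.2])]
        linarith [hy.1]
      rw [show (y - b) * (b' / b - Em) / a = (b' / b - Em) * ((y - b) / a) by ring, abs_mul]
      calc |b' / b - Em| * |(y - b) / a| ≤ (2 * (K₁ * ε)) * 1 :=
            mul_le_mul hPE hyb (abs_nonneg _) (by linarith)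
        _ ≤ 4 * K₁ * ε := by linarith
    have hvy : |(b' / b - Em) * (x / a) + Em - B| ≤ 4 * K₁ * ε := by
      have := conv_abs (x / a) (b' / b) Em B (K₁ * ε)
        (div_nonneg hx.1 ha.le) ((div_le_one ha).mpr hx.2) hPB hEmB
      calc |(b' / b - Em) * (x / a) + Em - B| ≤ K₁ * ε := this
        _ ≤ 4 * K₁ * ε := by linarith
    have := dilat_le B C (4 * K₁ * ε) _ _ hC hB (by positivity) hδB hvx hvy
    calc dilat C 0 ((y - b) * (b' / b - Em) / a) ((b' / b - Em) * (x / a) + Em)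
        ≤ max (C / B) (B / C) + (8 * (max C B) * B + 4 * B ^ 2 + 2 * (max C B) ^ 2)
          / (C * B ^ 2) * (4 * K₁ * ε) := this
      _ = max (C / B) (B / C) + (8 * (max C B) * B + 4 * B ^ 2 + 2 * (max C B) ^ 2)
          / (C * B ^ 2) * (4 * K₁) * ε := by ring
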